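/- Let φ₁, …, φ_m be pairwise classically inconsistent formulas and let Γ be the set of all disjunctions of exactly n distinct φᵢ's (0 < n < m). If a probability distribution P satisfies P(γ) > n/m for every γ ∈ Γ, then a contradiction follows; i.e., no probability distribution assigns every such n-fold disjunction probability strictly greater than n/m. -/

import Mathlib

/-- Propositional formulas: atoms, negation, disjunction. -/
inductive Fml : Type
  | atom : ℕ → Fml
  | neg : Fml → Fml
  | or : Fml → Fml → Fml
deriving DecidableEq

namespace Fml

def and (φ ψ : Fml) : Fml := neg (or (neg φ) (neg ψ))

def bot : Fml := and (atom 0) (neg (atom 0))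

def imp (φ ψ : Fml) : Fml := or (neg φ) ψ

def eval (v : ℕ → Bool) : Fml → Bool
  | atom n => v n
  | neg φ => !(eval v φ)
  | or φ ψ => (eval v φ) || (eval v ψ)

end Fml

/-- Two formulas are jointly classically unsatisfiable. -/
def Incompatible (φ ψ : Fml) : Prop :=
  ∀ v : ℕ → Bool, ¬(φ.eval v = true ∧ ψ.eval v = true)

/-- Classical (Set-Set) validity. -/
def ClValid (Γ Δ : Finset Fml) : Prop :=
  ∀ v : ℕ → Bool, (∀ γ ∈ Γ, γ.eval v = true) → ∃ δ ∈ Δ, δ.eval v = true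

/-- Classical single-conclusion entailment. -/
def ClEntails (Γ : Finset Fml) (φ : Fml) : Prop :=
  ∀ v : ℕ → Bool, (∀ γ ∈ Γ, γ.eval v = true) → φ.eval v = true

def ClConsistent (Γ : Finset Fml) : Prop :=
  ∃ v : ℕ → Bool, ∀ γ ∈ Γ, γ.eval v = true

def Tautology (φ : Fml) : Prop := ∀ v : ℕ → Bool, φ.eval v = true

/-- A probability distribution on formulas. -/
structure ProbDist where
  p : Fml → ℝ
  nonneg : ∀ φ, 0 ≤ p φ
  le_one : ∀ φ, p φ ≤ 1
  bot_eq : p Fml.bot = 0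
  neg_eq : ∀ φ, p (Fml.neg φ) = 1 - p φ
  add_eq : ∀ φ ψ, Incompatible φ ψ → p (Fml.or φ ψ) = p φ + p ψ

/-- A probabilistic model: worlds with classical valuations and a finitely
additive probability measure on subsets of worlds. -/
structure PModel where
  W : Type
  nonempty : Nonempty W
  val : W → ℕ → Bool
  μ : Set W → ℝ
  nonneg : ∀ A : Set W, 0 ≤ μ A
  empty_eq : μ (∅ : Set W) = 0
  univ_eq : μ (Set.univ : Set W) = 1
  add_eq : ∀ A B : Set W, Disjoint A B → μ (A ∪ B) = μ A + μ B

/-- Denotation of a formula in a model. -/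
def PModel.den (M : PModel) (φ : Fml) : Set M.W := {w | φ.eval (M.val w) = true}

/-- Induced probability of a formula in a model. -/
def PModel.prob (M : PModel) (φ : Fml) : ℝ := M.μ (M.den φ)

/-- An upset of [0,1]: contains 1, excludes 0, upward closed within [0,1]. -/
def IsUpset (α : Set ℝ) : Prop :=
  α ⊆ Set.Icc 0 1 ∧ (1 : ℝ) ∈ α ∧ (0 : ℝ) ∉ α ∧
    ∀ x ∈ α, ∀ y ∈ Set.Icc (0:ℝ) 1, x ≤ y → y ∈ α

/-- The mirror image of α. -/
def mirror (α : Set ℝ) : Set ℝ := {x ∈ Set.Icc (0:ℝ) 1 | 1 - x ∈ α}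

/-- The dual of α. -/
def dual (α : Set ℝ) : Set ℝ := Set.Icc (0:ℝ) 1 \ mirror α

/-- Conjunction of a finite set of formulas. -/
noncomputable def conj (Γ : Finset Fml) : Fml := Γ.toList.foldr Fml.and (Fml.neg Fml.bot)

/-- Disjunction of a finite set of formulas. -/
noncomputable def disj (Δ : Finset Fml) : Fml := Δ.toList.foldr Fml.or Fml.bot

/-- Disjunction of a list of formulas. -/
def disjList (l : List Fml) : Fml := l.foldr Fml.or Fml.bot

/-- α-preservation validity (over probability distributions). -/
def PresValid (α : Set ℝ) (Γ Δ : Finset Fml) : Prop :=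
  ∀ P : ProbDist, (∀ γ ∈ Γ, P.p γ ∈ α) → ∃ δ ∈ Δ, P.p δ ∈ α

/-- α-preservation validity (over probabilistic models). -/
def PresValidM (α : Set ℝ) (Γ Δ : Finset Fml) : Prop :=
  ∀ M : PModel, (∀ γ ∈ Γ, M.prob γ ∈ α) → ∃ δ ∈ Δ, M.prob δ ∈ α

/-- α-symmetric validity. -/
def SymValid (α : Set ℝ) (Γ Δ : Finset Fml) : Prop :=
  ∀ P : ProbDist, (∀ γ ∈ Γ, P.p γ ∈ α) → ∃ δ ∈ Δ, P.p δ ∉ mirror α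

/-- α-satisfiability of a finite set of formulas. -/
def Satis (α : Set ℝ) (Γ : Finset Fml) : Prop :=
  ∃ P : ProbDist, ∀ γ ∈ Γ, P.p γ ∈ α

lemma eval_disjList (v : ℕ → Bool) (l : List Fml) :
    (disjList l).eval v = l.any (fun ψ => ψ.eval v) := by
  induction l with
  | nil => simp [disjList, Fml.bot, Fml.and, Fml.eval]
  | cons a l ih => simp [disjList, Fml.eval] at ih ⊢; rw [ih]

lemma incompat_disjList {χ : Fml} {l : List Fml}
    (h : ∀ ψ ∈ l, Incompatible χ ψ) : Incompatible χ (disjList l) := by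
  intro v ⟨h1, h2⟩
  rw [eval_disjList] at h2
  obtain ⟨ψ, hψ, hev⟩ := List.any_eq_true.1 h2
  exact h ψ hψ v ⟨h1, hev⟩

lemma p_disjList (P : ProbDist) {l : List Fml}
    (h : l.Pairwise Incompatible) : P.p (disjList l) = (l.map P.p).sum := by
  induction l with
  | nil => simpa [disjList] using P.bot_eq
  | cons a l ih =>
    rcases List.pairwise_cons.1 h with ⟨ha, hl⟩
    have : P.p (disjList (a :: l)) = P.p a + P.p (disjList l) :=
      P.add_eq _ _ (incompat_disjList ha)
    rw [this, ih hl]; simp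

lemma p_disj_finset {m : ℕ} (φ : Fin m → Fml)
    (hpair : ∀ i j, i ≠ j → Incompatible (φ i) (φ j)) (P : ProbDist)
    (s : Finset (Fin m)) :
    P.p (disjList (s.toList.map φ)) = ∑ i ∈ s, P.p (φ i) := by
  have hpw : (s.toList.map φ).Pairwise Incompatible := by
    refine List.Pairwise.map φ (fun a b hab => hpair a b hab) ?_
    exact s.nodup_toList
  rw [p_disjList P hpw, List.map_map]
  exact Finset.sum_map_toList s (P.p ∘ φ)

lemma count_containing {m n : ℕ} (hn : 0 < n) (hnm : n ≤ m) (i : Fin m) :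
    ((Finset.powersetCard n (Finset.univ : Finset (Fin m))).filter
      (fun s => i ∈ s)).card = (m - 1).choose (n - 1) := by
  classical
  have hcard : ((Finset.univ : Finset (Fin m)).erase i).card = m - 1 := by
    simp [Finset.card_erase_of_mem]
  rw [← hcard, ← Finset.card_powersetCard]
  apply Finset.card_bij (fun s _ => s.erase i)
  · intro s hs
    simp only [Finset.mem_filter, Finset.mem_powersetCard] at hs
    simp only [Finset.mem_powersetCard]
    constructor
    · intro x hx
      simp only [Finset.mem_erase] at hx ⊢
      exact ⟨hx.1, Finset.mem_univ x⟩
    · rw [Finset.card_erase_of_mem hs.2, hs.1.2]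
  · intro s hs t ht hst
    simp only [Finset.mem_filter] at hs ht
    have : insert i (s.erase i) = insert i (t.erase i) := by rw [hst]
    rwa [Finset.insert_erase hs.2, Finset.insert_erase ht.2] at this
  · intro t ht
    simp only [Finset.mem_powersetCard] at ht
    have hit : i ∉ t := fun h => (Finset.mem_erase.1 (ht.1 h)).1 rfl
    refine ⟨insert i t, ?_, ?_⟩
    · simp only [Finset.mem_filter, Finset.mem_powersetCard]
      refine ⟨⟨Finset.subset_univ _, ?_⟩, Finset.mem_insert_self _ _⟩
      rw [Finset.card_insert_of_notMem hit, ht.2]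
      omega
    · rw [Finset.erase_insert hit]

/-- given m pairwise inconsistent formulas, no probability
distribution gives every disjunction of n distinct ones probability > n/m. -/
theorem stmt12 (m n : ℕ) (h0 : 0 < n) (hnm : n < m) (φ : Fin m → Fml)
    (hpair : ∀ i j, i ≠ j → Incompatible (φ i) (φ j)) (P : ProbDist)
    (hbig : ∀ s : Finset (Fin m), s.card = n →
      ((n:ℝ)/(m:ℝ)) < P.p (disjList (s.toList.map φ))) :
    False := by
  classical
  set f : Fin m → ℝ := fun i => P.p (φ i) with hf
  set T : ℝ := ∑ i, f i with hT
  -- T ≤ 1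
  have hT1 : T ≤ 1 := by
    have h := p_disj_finset φ hpair P Finset.univ
    have : (∑ i, P.p (φ i)) ≤ 1 := h ▸ P.le_one _
    exact this
  set PC := Finset.powersetCard n (Finset.univ : Finset (Fin m)) with hPC
  set C : ℕ := (m - 1).choose (n - 1) with hC
  -- double counting
  have hdc : ∑ s ∈ PC, ∑ i ∈ s, f i = (C : ℝ) * T := by
    have : ∑ s ∈ PC, ∑ i ∈ s, f i
        = ∑ s ∈ PC, ∑ i : Fin m, if i ∈ s then f i else 0 := by
      refine Finset.sum_congr rfl fun s _ => ?_
      rw [Finset.sum_ite_mem]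
      simp
    rw [this, Finset.sum_comm]
    have : ∀ i : Fin m, ∑ s ∈ PC, (if i ∈ s then f i else 0) = (C : ℝ) * f i := by
      intro i
      rw [Finset.sum_ite, Finset.sum_const_zero, add_zero, Finset.sum_const,
        count_containing h0 hnm.le i, nsmul_eq_mul]
    rw [Finset.sum_congr rfl fun i _ => this i, ← Finset.mul_sum]
  -- each summand > n/m
  have hcardPC : PC.card = m.choose n := by
    rw [hPC, Finset.card_powersetCard, Finset.card_univ, Fintype.card_fin]
  have hlb : (PC.card : ℝ) * ((n : ℝ) / m) < ∑ s ∈ PC, ∑ i ∈ s, f i := by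
    have hne : PC.Nonempty := Finset.powersetCard_nonempty_of_le (by simp [hnm.le])
    have := Finset.sum_lt_sum_of_nonempty hne (f := fun _ => (n : ℝ) / m)
      (g := fun s => ∑ i ∈ s, f i) ?_
    · simpa [Finset.sum_const, nsmul_eq_mul] using this
    · intro s hs
      have hsc : s.card = n := (Finset.mem_powersetCard.1 hs).2
      have := hbig s hsc
      rwa [p_disj_finset φ hpair P s] at this
  -- key identity: choose m n * n = m * C
  have hkey : m.choose n * n = m * C := by
    have h1 : m - 1 + 1 = m := by omega
    have h2 : n - 1 + 1 = n := by omega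
    have := Nat.add_one_mul_choose_eq (m - 1) (n - 1)
    rw [h1, h2] at this
    exact this.symm
  have hm0 : (0 : ℝ) < m := by exact_mod_cast h0.trans hnm
  have heq : (PC.card : ℝ) * ((n : ℝ) / m) = C := by
    rw [hcardPC, mul_div_assoc', div_eq_iff hm0.ne']
    rw [mul_comm (C : ℝ)]
    exact_mod_cast hkey
  have hCT : (C : ℝ) * T ≤ C :=
    mul_le_of_le_one_right (by positivity) hT1
  rw [hdc, heq] at hlb
  linarith
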